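/- Let n ≥ 2 and let p_1(z),...,p_m(z) be homogeneous polynomials of degree d ≥ 1 in z = (z_1,...,z_n) ∈ ℂⁿ that are linearly independent in ℂ[z]. Let k ≥ 0 and suppose there exist k+1 solutions (Q^(1), r^(1)(z)), ..., (Q^(k+1), r^(k+1)(z)) of the polynomial identity p(z)Q = r(z)z that are linearly independent (equivalently, the matrices Q^(1),...,Q^(k+1) are linearly independent in the space of complex m×n matrices, or equivalently r^(1),...,r^(k+1) are linearly independent polynomials). Then m ≥ Σ_{j=0}^{k} (n−j). -/

import Mathlib

open MvPolynomial

noncomputable section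
variable {n : ℕ}

abbrev mo (n : ℕ) : MonomialOrder (Fin n) := MonomialOrder.lex

noncomputable def mdeg (q : MvPolynomial (Fin n) ℂ) : (mo n).syn :=
  q.support.sup (mo n).toSyn

lemma le_mdeg {q : MvPolynomial (Fin n) ℂ} {s : Fin n →₀ ℕ} (hs : s ∈ q.support) :
    (mo n).toSyn s ≤ mdeg q := Finset.le_sup hs

lemma exists_mdeg {q : MvPolynomial (Fin n) ℂ} (hq : q ≠ 0) :
    ∃ s ∈ q.support, (mo n).toSyn s = mdeg q := by
  obtain ⟨s, hs, h⟩ := Finset.exists_mem_eq_sup q.support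
    (MvPolynomial.support_nonempty.mpr hq) (mo n).toSyn
  exact ⟨s, hs, h.symm⟩

lemma mdeg_coeff_ne_zero {q : MvPolynomial (Fin n) ℂ} (hq : q ≠ 0) :
    coeff ((mo n).toSyn.symm (mdeg q)) q ≠ 0 := by
  obtain ⟨s, hs, h⟩ := exists_mdeg hq
  have : (mo n).toSyn.symm (mdeg q) = s := by rw [← h]; simp
  rw [this]
  exact MvPolynomial.mem_support_iff.mp hs

lemma mdeg_mul_X {q : MvPolynomial (Fin n) ℂ} (hq : q ≠ 0) (ν : Fin n) :
    mdeg (q * X ν) = mdeg q + (mo n).toSyn (Finsupp.single ν 1) := by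
  apply le_antisymm
  · apply Finset.sup_le
    intro s hs
    rw [support_mul_X] at hs
    simp only [Finset.mem_map, addRightEmbedding_apply] at hs
    obtain ⟨t, ht, rfl⟩ := hs
    rw [map_add]
    exact add_le_add (le_mdeg ht) le_rfl
  · obtain ⟨s, hs, h⟩ := exists_mdeg hq
    have hmem : s + Finsupp.single ν 1 ∈ (q * X ν).support := by
      rw [support_mul_X]
      simp only [Finset.mem_map, addRightEmbedding_apply]
      exact ⟨s, hs, rfl⟩
    have := le_mdeg hmem
    rwa [map_add, h] at this

lemma li_of_mdeg_inj {ι : Type*} (g : ι → MvPolynomial (Fin n) ℂ) (h0 : ∀ i, g i ≠ 0)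
    (hinj : Function.Injective fun i => mdeg (g i)) : LinearIndependent ℂ g := by
  classical
  rw [linearIndependent_iff']
  intro t c hsum i hi
  by_contra hc
  set t' := t.filter (fun j => c j ≠ 0) with ht'
  have hne : t'.Nonempty := ⟨i, Finset.mem_filter.mpr ⟨hi, hc⟩⟩
  obtain ⟨i₀, hi₀, hmax⟩ := Finset.exists_max_image t' (fun j => mdeg (g j)) hne
  have hi₀t : i₀ ∈ t := (Finset.mem_filter.mp hi₀).1
  have hc₀ : c i₀ ≠ 0 := (Finset.mem_filter.mp hi₀).2
  set μ := (mo n).toSyn.symm (mdeg (g i₀)) with hμ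
  have h1 : coeff μ (∑ j ∈ t, c j • g j) = 0 := by rw [hsum]; simp
  rw [coeff_sum] at h1
  have h2 : ∑ j ∈ t, coeff μ (c j • g j) = c i₀ * coeff μ (g i₀) := by
    rw [Finset.sum_eq_single_of_mem i₀ hi₀t]
    · rw [coeff_smul]; rfl
    · intro j hj hji
      rw [coeff_smul]
      rcases eq_or_ne (c j) 0 with h | h
      · simp [h]
      by_cases hcf : coeff μ (g j) = 0
      · simp [hcf]
      exfalso
      have hjt' : j ∈ t' := Finset.mem_filter.mpr ⟨hj, h⟩
      have hmem : μ ∈ (g j).support := MvPolynomial.mem_support_iff.mpr hcf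
      have hle : mdeg (g i₀) ≤ mdeg (g j) := by
        have := le_mdeg hmem
        rwa [hμ, AddEquiv.apply_symm_apply] at this
      have heq : mdeg (g j) = mdeg (g i₀) := le_antisymm (hmax j hjt') hle
      exact hji (hinj heq)
  rw [h2] at h1
  rcases mul_eq_zero.mp h1 with h | h
  · exact hc₀ h
  · exact mdeg_coeff_ne_zero (h0 i₀) h

lemma exists_distinct_mdeg (W : Submodule ℂ (MvPolynomial (Fin n) ℂ)) (U : Finset (Fin n →₀ ℕ))
    (hWU : ∀ q ∈ W, MvPolynomial.support q ⊆ U) (K : ℕ)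
    (hK : K ≤ Module.finrank ℂ W) :
    ∃ s : Fin K → MvPolynomial (Fin n) ℂ, (∀ i, s i ∈ W) ∧ (∀ i, s i ≠ 0) ∧
      Function.Injective fun i => mdeg (s i) := by
  classical
  set T : Finset (mo n).syn :=
    (U.image (mo n).toSyn).filter (fun μ => ∃ q ∈ W, q ≠ 0 ∧ mdeg q = μ) with hT
  have hrep : ∀ μ : T, ∃ q, q ∈ W ∧ q ≠ 0 ∧ mdeg q = (μ : (mo n).syn) := by
    intro ⟨μ, hμ⟩
    obtain ⟨q, hqW, hq0, hqd⟩ := (Finset.mem_filter.mp hμ).2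
    exact ⟨q, hqW, hq0, hqd⟩
  choose f hfW hf0 hfd using hrep
  set Z := Submodule.span ℂ (Set.range f) with hZ
  have key : ∀ μ : (mo n).syn, ∀ q, q ∈ W → mdeg q = μ → q ∈ Z := by
    intro μ
    induction μ using WellFoundedLT.induction with
    | _ μ IH =>
    intro q hqW hqd
    by_cases hq : q = 0
    · simp [hq]
    have hTq : mdeg q ∈ T := by
      obtain ⟨s, hs, hsd⟩ := exists_mdeg hq
      exact Finset.mem_filter.mpr ⟨Finset.mem_image.mpr ⟨s, hWU q hqW hs, hsd⟩, q, hqW, hq, rfl⟩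
    set p₀ := f ⟨mdeg q, hTq⟩ with hp₀
    have hp₀d : mdeg p₀ = mdeg q := hfd _
    set μ₀ := (mo n).toSyn.symm (mdeg q) with hμ₀
    have hcp₀ : coeff μ₀ p₀ ≠ 0 := by
      have := mdeg_coeff_ne_zero (hf0 ⟨mdeg q, hTq⟩)
      rwa [hp₀d] at this
    set c := coeff μ₀ q / coeff μ₀ p₀ with hc
    set w := q - c • p₀ with hw
    have hwW : w ∈ W := sub_mem hqW (Submodule.smul_mem _ _ (hfW _))
    have hp₀Z : p₀ ∈ Z := Submodule.subset_span ⟨⟨mdeg q, hTq⟩, rfl⟩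
    have hwc : coeff μ₀ w = 0 := by
      simp only [hw, coeff_sub, coeff_smul, smul_eq_mul, hc]
      field_simp
      simp
    by_cases hw0 : w = 0
    · have hq' : q = c • p₀ := by rwa [sub_eq_zero] at hw0
      rw [hq']; exact Submodule.smul_mem _ _ hp₀Z
    · have hlt : mdeg w < μ := by
        rw [← hqd]
        obtain ⟨t, ht, htd⟩ := exists_mdeg hw0
        rw [← htd]
        have hsub : t ∈ q.support ∪ (c • p₀).support := MvPolynomial.support_sub _ _ _ ht
        have hle : (mo n).toSyn t ≤ mdeg q := by
          rcases Finset.mem_union.mp hsub with h | h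
          · exact le_mdeg h
          · have h' : t ∈ p₀.support := MvPolynomial.support_smul h
            have := le_mdeg h'
            rwa [hp₀d] at this
        have hne : t ≠ μ₀ := by
          intro h; rw [h] at ht; exact (MvPolynomial.mem_support_iff.mp ht) hwc
        have hne' : (mo n).toSyn t ≠ mdeg q := by
          intro h; apply hne; rw [hμ₀, ← h]; simp
        exact lt_of_le_of_ne hle hne'
      have hwZ := IH (mdeg w) hlt w hwW rfl
      have hq' : q = w + c • p₀ := by rw [hw]; ring
      rw [hq']; exact add_mem hwZ (Submodule.smul_mem _ _ hp₀Z)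
  have hTcard : K ≤ T.card := by
    by_contra hlt
    push_neg at hlt
    have hWZ : W ≤ Z := fun q hq => key (mdeg q) q hq rfl
    have hfin : FiniteDimensional ℂ Z := FiniteDimensional.span_of_finite ℂ (Set.finite_range f)
    have h1 : Module.finrank ℂ W ≤ Module.finrank ℂ Z := Submodule.finrank_mono hWZ
    have h2 : Module.finrank ℂ Z ≤ T.card := by
      have := finrank_range_le_card (R := ℂ) f
      rwa [Set.finrank, Fintype.card_coe] at this
    omega
  obtain ⟨emb⟩ : Nonempty (Fin K ↪ T) := by
    apply Function.Embedding.nonempty_of_card_le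
    simpa [Fintype.card_coe] using hTcard
  refine ⟨fun i => f (emb i), fun i => hfW _, fun i => hf0 _, ?_⟩
  intro i j hij
  simp only [hfd] at hij
  exact emb.injective (Subtype.ext hij)

end

/-- **Lemma (newlemma1, key counting step).** Let `p_1,...,p_m` be linearly independent
homogeneous polynomials of degree `d ≥ 1` in `n ≥ 2` variables.  If there exist `k+1`
linearly independent solutions `(Q^(1),r^(1)), ..., (Q^(k+1),r^(k+1))` of the polynomial
identity `p(z)Q = r(z)z` (the matrices `Q^(i)` being linearly independent), then
`m ≥ ∑_{j=0}^{k} (n-j)`. -/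
theorem m_ge_sum (n m d k : ℕ) (hn : 2 ≤ n) (hd : 1 ≤ d)
    (p : Fin m → MvPolynomial (Fin n) ℂ)
    (hhom : ∀ j, (p j).IsHomogeneous d)
    (hli : LinearIndependent ℂ p)
    (Q : Fin (k + 1) → Matrix (Fin m) (Fin n) ℂ)
    (r : Fin (k + 1) → MvPolynomial (Fin n) ℂ)
    (hr : ∀ i, (r i).IsHomogeneous (d - 1))
    (hsol : ∀ i, ∀ ν : Fin n, (∑ j, Q i j ν • p j) = r i * X ν)
    (hQli : LinearIndependent ℂ Q) :
    (∑ j ∈ Finset.range (k + 1), (n - j)) ≤ m := by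
  classical
  -- Step A : the r i are linearly independent
  have hrli : LinearIndependent ℂ r := by
    rw [Fintype.linearIndependent_iff]
    intro c hc
    have h1 : ∀ ν j, ∑ i, c i * Q i j ν = 0 := by
      intro ν j
      have e1 : ∑ j', (∑ i, c i * Q i j' ν) • p j' = 0 := by
        calc ∑ j', (∑ i, c i * Q i j' ν) • p j'
            = ∑ j', ∑ i, (c i * Q i j' ν) • p j' := by simp [Finset.sum_smul]
          _ = ∑ i, ∑ j', (c i * Q i j' ν) • p j' := Finset.sum_comm
          _ = ∑ i, c i • (∑ j', Q i j' ν • p j') := by simp [Finset.smul_sum, smul_smul]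
          _ = ∑ i, c i • (r i * X ν) := by simp only [hsol]
          _ = (∑ i, c i • r i) * X ν := by rw [Finset.sum_mul]; simp [smul_mul_assoc]
          _ = 0 := by rw [hc, zero_mul]
      exact (Fintype.linearIndependent_iff.mp hli) _ e1 j
    have h2 : ∑ i, c i • Q i = 0 := by
      ext j ν
      simp only [Matrix.sum_apply, Matrix.smul_apply, Matrix.zero_apply, smul_eq_mul]
      exact h1 ν j
    exact fun i => (Fintype.linearIndependent_iff.mp hQli) c h2 i
  -- the two spans
  set W := Submodule.span ℂ (Set.range r) with hW
  set V := Submodule.span ℂ (Set.range p) with hV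
  have hWfr : Module.finrank ℂ W = k + 1 := by
    rw [hW, finrank_span_eq_card hrli, Fintype.card_fin]
  set U : Finset (Fin n →₀ ℕ) := Finset.univ.biUnion (fun i => (r i).support) with hU
  have hWU : ∀ q ∈ W, MvPolynomial.support q ⊆ U := by
    have hle : W ≤
        { carrier := {q : MvPolynomial (Fin n) ℂ | q.support ⊆ U}
          add_mem' := by
            intro a b ha hb
            exact (MvPolynomial.support_add (p := a) (q := b)).trans
              (Finset.union_subset ha hb)
          zero_mem' := by simp
          smul_mem' := by
            intro c x hx
            exact MvPolynomial.support_smul.trans hx } := by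
      rw [hW, Submodule.span_le]
      rintro _ ⟨i, rfl⟩
      exact Finset.subset_biUnion_of_mem (fun i => (r i).support) (Finset.mem_univ i)
    exact fun q hq => hle hq
  obtain ⟨s, hsW, hs0, hsinj⟩ := exists_distinct_mdeg W U hWU (k + 1) (le_of_eq hWfr.symm)
  set μ : Fin (k + 1) → (mo n).syn := fun i => mdeg (s i) with hμdef
  set e : Fin n → (mo n).syn := fun ν => (mo n).toSyn (Finsupp.single ν 1) with he
  have heinj : Function.Injective e := by
    intro ν ω h
    exact Finsupp.single_left_injective one_ne_zero ((mo n).toSyn.injective h)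
  -- key cancellation lemma
  have key2 : ∀ i i' : Fin (k + 1), ∀ ν₁ ν₂ ν₁' ν₂' : Fin n, μ i ≠ μ i' →
      μ i' + e ν₁' = μ i + e ν₁ → μ i' + e ν₂' = μ i + e ν₂ → ν₁ = ν₂ := by
    intro i i' ν₁ ν₂ ν₁' ν₂' hne h1 h2
    have hadd : e ν₁' + e ν₂ = e ν₂' + e ν₁ := by
      have h3 : μ i' + (e ν₁' + e ν₂) = μ i' + (e ν₂' + e ν₁) := by
        rw [← add_assoc, h1, ← add_assoc, h2]
        exact add_right_comm _ _ _
      exact add_left_cancel h3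
    have hνν : ν₁' ≠ ν₁ := by
      intro h
      subst h
      exact hne (add_right_cancel h1).symm
    have hf : Finsupp.single ν₁' 1 + Finsupp.single ν₂ 1
        = Finsupp.single ν₂' 1 + Finsupp.single ν₁ (1 : ℕ) := by
      apply (mo n).toSyn.injective
      simpa only [map_add] using hadd
    by_contra hne2
    have h4 := congrArg (fun g : Fin n →₀ ℕ => g ν₁) hf
    simp only [Finsupp.add_apply, Finsupp.single_apply, if_neg hνν,
      if_neg (Ne.symm hne2), if_pos rfl] at h4
    split_ifs at h4 <;> omega
  -- the good sets
  set S : Fin (k + 1) → Finset (Fin n) := fun i =>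
    Finset.univ.filter (fun ν => ∀ i' < i, ∀ ν', μ i' + e ν' ≠ μ i + e ν) with hS
  have hScard : ∀ i : Fin (k + 1), n - i.val ≤ (S i).card := by
    intro i
    set B : Finset (Fin n) :=
      Finset.univ.filter (fun ν => ¬ (∀ i' < i, ∀ ν', μ i' + e ν' ≠ μ i + e ν)) with hB
    have hSB : (S i).card + B.card = n := by
      rw [hS, hB, Finset.card_filter_add_card_filter_not, Finset.card_univ,
        Fintype.card_fin]
    have hwit : ∀ ν ∈ B, ∃ i', i' < i ∧ ∃ ν', μ i' + e ν' = μ i + e ν := by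
      intro ν hν
      have := (Finset.mem_filter.mp hν).2
      push_neg at this
      exact this
    have hBcard : B.card ≤ i.val := by
      set F : Fin n → Fin (k + 1) := fun ν =>
        if h : ν ∈ B then (hwit ν h).choose else i with hF
      have hmaps : ∀ ν ∈ B, F ν ∈ Finset.univ.filter (· < i) := by
        intro ν hν
        rw [hF]
        simp only [dif_pos hν]
        exact Finset.mem_filter.mpr ⟨Finset.mem_univ _, (hwit ν hν).choose_spec.1⟩
      have hinjOn : Set.InjOn F B := by
        intro ν₁ h₁ ν₂ h₂ hFeq
        have h₁' : ν₁ ∈ B := h₁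
        have h₂' : ν₂ ∈ B := h₂
        simp only [hF, dif_pos h₁', dif_pos h₂'] at hFeq
        obtain ⟨hlt₁, ν₁', hν₁'⟩ := (hwit ν₁ h₁').choose_spec
        obtain ⟨hlt₂, ν₂', hν₂'⟩ := (hwit ν₂ h₂').choose_spec
        rw [hFeq] at hν₁'
        have hne : μ i ≠ μ ((hwit ν₂ h₂').choose) := by
          intro h
          exact (ne_of_lt hlt₂) (hsinj h.symm)
        exact key2 i _ ν₁ ν₂ ν₁' ν₂' hne hν₁' hν₂'
      have hcard := Finset.card_le_card_of_injOn F hmaps hinjOn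
      calc B.card ≤ (Finset.univ.filter (· < i)).card := hcard
        _ = (Finset.Iio i).card := by rw [Finset.filter_gt_eq_Iio]
        _ = i.val := by simp
    omega
  -- multiplication by X ν sends W into V
  have hmulV : ∀ q ∈ W, ∀ ν : Fin n, q * X ν ∈ V := by
    intro q hq ν
    have hle : W ≤ Submodule.comap (LinearMap.mulRight ℂ (X ν : MvPolynomial (Fin n) ℂ)) V := by
      rw [hW, Submodule.span_le]
      rintro _ ⟨i, rfl⟩
      simp only [Set.mem_preimage, SetLike.mem_coe, Submodule.mem_comap,
        LinearMap.mulRight_apply]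
      rw [← hsol i ν]
      exact Submodule.sum_mem _ fun j _ =>
        Submodule.smul_mem _ _ (Submodule.subset_span ⟨j, rfl⟩)
    exact hle hq
  -- the final family
  have hfinV : FiniteDimensional ℂ V := FiniteDimensional.span_of_finite ℂ (Set.finite_range p)
  have hSmem : ∀ (i : Fin (k + 1)) (ν : Fin n), ν ∈ S i →
      ∀ i' < i, ∀ ν', μ i' + e ν' ≠ μ i + e ν := fun i ν hν => (Finset.mem_filter.mp hν).2
  set ι := (Σ i : Fin (k + 1), {ν // ν ∈ S i}) with hι
  set g : ι → MvPolynomial (Fin n) ℂ := fun x => s x.1 * X x.2.1 with hg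
  have hg0 : ∀ x : ι, g x ≠ 0 := fun x => mul_ne_zero (hs0 x.1) (X_ne_zero _)
  have hgdeg : ∀ x : ι, mdeg (g x) = μ x.1 + e x.2.1 := fun x => mdeg_mul_X (hs0 x.1) _
  have hginj : Function.Injective fun x : ι => mdeg (g x) := by
    intro x y hxy
    simp only [hgdeg] at hxy
    obtain ⟨i, ν, hν⟩ := x
    obtain ⟨j, ω, hω⟩ := y
    rcases lt_trichotomy i j with h | h | h
    · exact absurd hxy (hSmem j ω hω i h ν)
    · subst h
      have hνω : ν = ω := heinj (add_left_cancel hxy)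
      subst hνω
      rfl
    · exact absurd hxy.symm (hSmem i ν hν j h ω)
  have hgV : ∀ x : ι, g x ∈ V := fun x => hmulV (s x.1) (hsW x.1) x.2.1
  have hgli : LinearIndependent ℂ g := li_of_mdeg_inj g hg0 hginj
  set g' : ι → V := fun x => ⟨g x, hgV x⟩ with hg'
  have hgli' : LinearIndependent ℂ g' := by
    apply LinearIndependent.of_comp V.subtype
    exact hgli
  have hcard : Fintype.card ι ≤ m := by
    have h1 := hgli'.fintype_card_le_finrank
    rwa [hV, finrank_span_eq_card hli, Fintype.card_fin] at h1
  calc ∑ j ∈ Finset.range (k + 1), (n - j)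
      = ∑ i : Fin (k + 1), (n - i.val) := (Fin.sum_univ_eq_sum_range _ _).symm
    _ ≤ ∑ i : Fin (k + 1), (S i).card := Finset.sum_le_sum (fun i _ => hScard i)
    _ = Fintype.card ι := by simp [hι, Fintype.card_sigma, Fintype.card_coe]
    _ ≤ m := hcard
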